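/- Let γ be the standard Gaussian measure on ℝ and let H_n be the probabilists' Hermite polynomials. Then ∫ ReLU(x) dγ(x) = 1/√(2π), ∫ ReLU(x)·H_1(x) dγ(x) = 1/2, and for every integer i ≥ 2, ∫ ReLU(x)·H_i(x) dγ(x) = (1/√(2π))·(H_i(0) + i·H_{i−2}(0)). -/

import Mathlib

open MeasureTheory ProbabilityTheory Real

/-- `ReLU(a) = max(0, a)`. -/
noncomputable def relu (a : ℝ) : ℝ := max 0 a

/-- The probabilists' Hermite polynomials, evaluated at a real number. -/
noncomputable def H (n : ℕ) (x : ℝ) : ℝ := Polynomial.aeval x (Polynomial.hermite n)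

open Polynomial Set Filter in
private lemma derivHermite : ∀ n : ℕ,
    Polynomial.derivative (Polynomial.hermite (n + 1))
      = Polynomial.C ((n : ℤ) + 1) * Polynomial.hermite n := by
  intro n
  induction n with
  | zero => simp [Polynomial.hermite_one, Polynomial.hermite_zero]
  | succ n ih =>
    rw [Polynomial.hermite_succ (n + 1), derivative_sub, derivative_mul, derivative_X, ih,
      derivative_C_mul]
    push_cast
    conv_rhs => rw [Polynomial.C_add, Polynomial.C_1]
    rw [Polynomial.hermite_succ n]
    ring

open Polynomial Set Filter in
private lemma aeval_hermite_succ (n : ℕ) (x : ℝ) :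
    H (n + 1) x = x * H n x - Polynomial.aeval x (Polynomial.derivative (Polynomial.hermite n)) := by
  simp [H, Polynomial.hermite_succ n, Polynomial.aeval_def]

open Polynomial Set Filter in
private lemma hd (n : ℕ) (x : ℝ) :
    HasDerivAt (fun y : ℝ => -(H n y * Real.exp (-(y ^ 2 / 2))))
      (H (n + 1) x * Real.exp (-(x ^ 2 / 2))) x := by
  have hp : HasDerivAt (fun y : ℝ => H n y)
      (Polynomial.aeval x (Polynomial.derivative (Polynomial.hermite n))) x :=
    (Polynomial.hermite n).hasDerivAt_aeval x
  have he : HasDerivAt (fun y : ℝ => Real.exp (-(y ^ 2 / 2)))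
      (-x * Real.exp (-(x ^ 2 / 2))) x := by
    have h1 : HasDerivAt (fun y : ℝ => -(y ^ 2 / 2)) (-x) x := by
      have := ((hasDerivAt_pow 2 x).div_const 2).fun_neg
      simpa using this
    simpa [mul_comm] using h1.exp
  have := (hp.fun_mul he).fun_neg
  refine this.congr_deriv ?_
  rw [aeval_hermite_succ n x]
  ring

open Polynomial Set Filter in
private lemma H_eq_eval (n : ℕ) (x : ℝ) :
    H n x = ((Polynomial.hermite n).map (algebraMap ℤ ℝ)).eval x := by
  rw [H, Polynomial.aeval_def, Polynomial.eval_map]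

open Polynomial Set Filter in
private lemma tendsto_poly_gauss (p : ℝ[X]) :
    Tendsto (fun x : ℝ => p.eval x * Real.exp (-(x ^ 2 / 2))) atTop (nhds 0) := by
  rw [tendsto_zero_iff_abs_tendsto_zero]
  simp only [Function.comp_def]
  apply squeeze_zero' (g := fun x : ℝ => |p.eval x / Real.exp x|)
  · exact Eventually.of_forall fun x => abs_nonneg _
  · filter_upwards [eventually_ge_atTop (2 : ℝ)] with x hx
    rw [abs_mul, abs_div, abs_of_pos (Real.exp_pos _), abs_of_pos (Real.exp_pos _),
      div_eq_mul_inv (|Polynomial.eval x p|) (Real.exp x), ← Real.exp_neg]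
    apply mul_le_mul_of_nonneg_left _ (abs_nonneg _)
    apply Real.exp_le_exp.2
    nlinarith
  · simpa using (Polynomial.tendsto_div_exp_atTop p).abs

open Polynomial Set Filter in
private lemma integrableOn_poly_gauss (p : ℝ[X]) :
    IntegrableOn (fun x : ℝ => p.eval x * Real.exp (-(x ^ 2 / 2))) (Set.Ioi 0) := by
  have base : ∀ k : ℕ, IntegrableOn (fun x : ℝ => x ^ k * Real.exp (-(x ^ 2 / 2))) (Set.Ioi 0) := by
    intro k
    have hs : (-1 : ℝ) < (k : ℝ) := lt_of_lt_of_le (by norm_num) (Nat.cast_nonneg k)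
    have h1 := integrableOn_rpow_mul_exp_neg_mul_sq (b := 1/2) (by norm_num) hs
    have heq : (fun x : ℝ => x ^ (k : ℝ) * Real.exp (-(1/2) * x ^ 2))
        = (fun x : ℝ => x ^ k * Real.exp (-(x ^ 2 / 2))) := by
      funext x
      rw [Real.rpow_natCast, show (-(1/2 : ℝ)) * x ^ 2 = -(x ^ 2 / 2) by ring]
    rwa [heq] at h1
  have hfun : (fun x : ℝ => p.eval x * Real.exp (-(x ^ 2 / 2)))
      = fun x : ℝ => ∑ k ∈ Finset.range (p.natDegree + 1),
          p.coeff k * (x ^ k * Real.exp (-(x ^ 2 / 2))) := by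
    funext x
    rw [Polynomial.eval_eq_sum_range, Finset.sum_mul]
    simp [mul_assoc]
  rw [hfun]
  exact integrable_finset_sum _ fun k _ => ((base k).const_mul _)

open Polynomial Set Filter in
private lemma integrableOn_H_gauss (n : ℕ) :
    IntegrableOn (fun x : ℝ => H n x * Real.exp (-(x ^ 2 / 2))) (Set.Ioi 0) := by
  have hfe : (fun x : ℝ => H n x * Real.exp (-(x ^ 2 / 2)))
      = fun x : ℝ => ((Polynomial.hermite n).map (algebraMap ℤ ℝ)).eval x
          * Real.exp (-(x ^ 2 / 2)) := by
    funext x; rw [H_eq_eval]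
  rw [hfe]
  exact integrableOn_poly_gauss _

open Polynomial Set Filter in
private lemma tendsto_H_gauss (n : ℕ) :
    Tendsto (fun x : ℝ => H n x * Real.exp (-(x ^ 2 / 2))) atTop (nhds 0) := by
  have hfe : (fun x : ℝ => H n x * Real.exp (-(x ^ 2 / 2)))
      = fun x : ℝ => ((Polynomial.hermite n).map (algebraMap ℤ ℝ)).eval x
          * Real.exp (-(x ^ 2 / 2)) := by
    funext x; rw [H_eq_eval]
  rw [hfe]
  exact tendsto_poly_gauss _

open Polynomial Set Filter in
private lemma integral_Ioi_H_gauss (n : ℕ) :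
    ∫ x in Set.Ioi (0:ℝ), H (n + 1) x * Real.exp (-(x ^ 2 / 2)) = H n 0 := by
  have key := integral_Ioi_of_hasDerivAt_of_tendsto'
    (f := fun y : ℝ => -(H n y * Real.exp (-(y ^ 2 / 2))))
    (f' := fun x : ℝ => H (n + 1) x * Real.exp (-(x ^ 2 / 2))) (a := 0) (m := 0)
    (fun x _ => hd n x) (integrableOn_H_gauss (n + 1)) (by simpa using (tendsto_H_gauss n).neg)
  rw [key]; simp

open Polynomial Set Filter in
private lemma gauss_int (f : ℝ → ℝ) :
    ∫ x, f x ∂(gaussianReal 0 1)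
      = (Real.sqrt (2 * Real.pi))⁻¹ * ∫ x, f x * Real.exp (-(x ^ 2 / 2)) := by
  rw [gaussianReal_of_var_ne_zero _ one_ne_zero]
  have hmeas : Measurable fun x => (gaussianPDFReal 0 1 x).toNNReal :=
    (measurable_gaussianPDFReal 0 1).real_toNNReal
  have hpdf : gaussianPDF 0 1 = fun x => ((gaussianPDFReal 0 1 x).toNNReal : ENNReal) := by
    funext x; rfl
  rw [hpdf, integral_withDensity_eq_integral_smul hmeas]
  rw [← integral_const_mul]
  congr 1
  funext x
  have h0 : (0:ℝ) ≤ gaussianPDFReal 0 1 x := gaussianPDFReal_nonneg 0 1 x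
  rw [NNReal.smul_def, smul_eq_mul, Real.coe_toNNReal _ h0]
  simp only [gaussianPDFReal]
  push_cast
  rw [mul_one, sub_zero]
  rw [neg_div]
  ring

open Polynomial Set Filter in
private lemma relu_int (i : ℕ) :
    ∫ x, relu x * H i x ∂(gaussianReal 0 1)
      = (Real.sqrt (2 * Real.pi))⁻¹ * ∫ x in Set.Ioi (0:ℝ), x * H i x * Real.exp (-(x ^ 2 / 2)) := by
  rw [gauss_int]
  congr 1
  rw [← setIntegral_eq_integral_of_forall_compl_eq_zero (s := Set.Ioi (0:ℝ))]
  · apply setIntegral_congr_fun measurableSet_Ioi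
    intro x hx
    simp only [relu, max_eq_right (le_of_lt (Set.mem_Ioi.mp hx))]
  · intro x hx
    simp only [Set.mem_Ioi, not_lt] at hx
    simp [relu, max_eq_left hx]

/-- Hermite coefficients of the ReLU function with respect to the standard Gaussian:
`∫ ReLU dγ = 1/√(2π)`, `∫ ReLU·H_1 dγ = 1/2`, and for `i ≥ 2`,
`∫ ReLU·H_i dγ = (1/√(2π))·(H_i(0) + i·H_{i-2}(0))`. -/
theorem stmt1 :
    (∫ x : ℝ, relu x ∂(gaussianReal 0 1)) = 1 / Real.sqrt (2 * Real.pi) ∧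
    (∫ x : ℝ, relu x * H 1 x ∂(gaussianReal 0 1)) = 1 / 2 ∧
    ∀ i : ℕ, 2 ≤ i →
      (∫ x : ℝ, relu x * H i x ∂(gaussianReal 0 1))
        = (1 / Real.sqrt (2 * Real.pi)) * (H i 0 + (i : ℝ) * H (i - 2) 0) := by
  have hH0 : ∀ x : ℝ, H 0 x = 1 := by intro x; simp [H]
  have hH1 : ∀ x : ℝ, H 1 x = x := by intro x; simp [H, Polynomial.hermite_one]
  have hs2π : Real.sqrt (2 * Real.pi) ≠ 0 := by positivity
  have hxH : ∀ n : ℕ, ∀ x : ℝ, x * H (n + 1) x = H (n + 2) x + ((n:ℝ) + 1) * H n x := by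
    intro n x
    have h1 := aeval_hermite_succ (n + 1) x
    rw [derivHermite n] at h1
    simp only [map_mul, Polynomial.aeval_C] at h1
    push_cast at h1
    rw [show n + 1 + 1 = n + 2 from rfl] at h1
    rw [← H] at h1
    linarith
  refine ⟨?_, ?_, ?_⟩
  · have h := relu_int 0
    simp only [hH0, mul_one] at h
    rw [h]
    have h2 : ∫ x in Set.Ioi (0:ℝ), x * Real.exp (-(x ^ 2 / 2)) = H 0 0 := by
      have h3 := integral_Ioi_H_gauss 0
      have hfe : (fun x : ℝ => H 1 x * Real.exp (-(x ^ 2 / 2)))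
          = fun x : ℝ => x * Real.exp (-(x ^ 2 / 2)) := by funext x; rw [hH1]
      rwa [hfe] at h3
    rw [h2, hH0, mul_one, one_div]
  · rw [relu_int 1]
    have hsplit : ∀ x : ℝ, x * H 1 x * Real.exp (-(x ^ 2 / 2))
        = H 2 x * Real.exp (-(x ^ 2 / 2)) + Real.exp (-(x ^ 2 / 2)) := by
      intro x
      have h := hxH 0 x
      simp only [Nat.reduceAdd, Nat.cast_zero] at h
      rw [hH0] at h
      rw [show x * H 1 x * Real.exp (-(x ^ 2 / 2)) = (x * H 1 x) * Real.exp (-(x ^ 2 / 2)) by ring,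
        h]
      ring
    rw [setIntegral_congr_fun measurableSet_Ioi (fun x _ => hsplit x)]
    rw [integral_add (integrableOn_H_gauss 2)]
    · have h1 : ∫ x in Set.Ioi (0:ℝ), H 2 x * Real.exp (-(x ^ 2 / 2)) = H 1 0 :=
        integral_Ioi_H_gauss 1
      have h2 : ∫ x in Set.Ioi (0:ℝ), Real.exp (-(x ^ 2 / 2)) = Real.sqrt (2 * Real.pi) / 2 := by
        simp only [show ∀ x : ℝ, -(x ^ 2 / 2) = -(1/2) * x ^ 2 from fun x => by ring]
        rw [integral_gaussian_Ioi (1/2), show (Real.pi / (1/2)) = 2 * Real.pi by ring]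
      rw [h1, h2, hH1]
      field_simp
      ring
    · have := integrableOn_poly_gauss (Polynomial.C (1:ℝ))
      simpa [IntegrableOn] using this
  · intro i hi
    obtain ⟨m, rfl⟩ : ∃ m, i = m + 2 := ⟨i - 2, by omega⟩
    rw [relu_int (m + 2)]
    have hxH2 : ∀ x : ℝ, x * H (m + 2) x = H (m + 3) x + ((m:ℝ) + 2) * H (m + 1) x := by
      intro x
      have h := hxH (m + 1) x
      rw [show m + 1 + 1 = m + 2 from rfl, show m + 1 + 2 = m + 3 from rfl] at h
      push_cast at h
      linarith
    have hF : ∀ x : ℝ, HasDerivAt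
        (fun y : ℝ => -(H (m + 2) y * Real.exp (-(y ^ 2 / 2)))
          + ((m:ℝ) + 2) * -(H m y * Real.exp (-(y ^ 2 / 2))))
        (x * H (m + 2) x * Real.exp (-(x ^ 2 / 2))) x := by
      intro x
      have h1 := (hd (m + 2) x).fun_add ((hd m x).const_mul ((m:ℝ) + 2))
      refine h1.congr_deriv ?_
      rw [show x * H (m + 2) x * Real.exp (-(x ^ 2 / 2))
          = (x * H (m + 2) x) * Real.exp (-(x ^ 2 / 2)) by ring, hxH2 x]
      rw [show m + 2 + 1 = m + 3 from rfl]
      ring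
    have hint : IntegrableOn (fun x : ℝ => x * H (m + 2) x * Real.exp (-(x ^ 2 / 2)))
        (Set.Ioi 0) := by
      have hfe : (fun x : ℝ => x * H (m + 2) x * Real.exp (-(x ^ 2 / 2)))
          = fun x : ℝ => (Polynomial.X * ((Polynomial.hermite (m + 2)).map (algebraMap ℤ ℝ))).eval x
              * Real.exp (-(x ^ 2 / 2)) := by
        funext x
        rw [Polynomial.eval_mul, Polynomial.eval_X, ← H_eq_eval]
      rw [hfe]
      exact integrableOn_poly_gauss _
    have htend : Filter.Tendsto
        (fun y : ℝ => -(H (m + 2) y * Real.exp (-(y ^ 2 / 2)))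
          + ((m:ℝ) + 2) * -(H m y * Real.exp (-(y ^ 2 / 2)))) Filter.atTop (nhds 0) := by
      have t1 := (tendsto_H_gauss (m + 2)).neg
      have t2 := ((tendsto_H_gauss m).neg).const_mul ((m:ℝ) + 2)
      have := t1.add t2
      simpa using this
    have key := integral_Ioi_of_hasDerivAt_of_tendsto' (fun x _ => hF x) hint htend
    rw [key]
    simp only [show -((0:ℝ) ^ 2 / 2) = 0 by norm_num, Real.exp_zero, mul_one, Nat.add_sub_cancel]
    push_cast
    rw [one_div]
    ring
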